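/- For h = 1 and 0 < |q| < 1, the operator values H_q^n(x) for x ∈ [0,1] are bounded in absolute value by 2^n. -/

import Mathlib

open Finset

noncomputable def qNum (q : ℝ) (n : ℕ) : ℝ := (1 - q ^ n) / (1 - q)

noncomputable def qFact (q : ℝ) : ℕ → ℝ
  | 0 => 1
  | n + 1 => qFact q n * qNum q (n + 1)

noncomputable def qExp (q z : ℝ) : ℝ := ∑' n : ℕ, z ^ n / qFact q n

noncomputable def qShift (q a : ℝ) (n : ℕ) : ℝ := ∏ j ∈ Finset.range n, (1 - q ^ j * a)

noncomputable def qBinom (q : ℝ) (n k : ℕ) : ℝ :=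
  qShift q q n / (qShift q q (n - k) * qShift q q k)


lemma qfac_ne {q : ℝ} (hq : |q| < 1) (j : ℕ) : 1 - q ^ j * q ≠ 0 := by
  have : |q ^ j * q| < 1 := by
    rw [abs_mul, abs_pow]
    calc |q|^j * |q| ≤ 1 * |q| := by
          apply mul_le_mul_of_nonneg_right _ (abs_nonneg q)
          exact pow_le_one₀ (abs_nonneg q) hq.le
      _ < 1 := by simpa
  have := (abs_lt.mp this).2
  nlinarith

lemma qShift_ne {q : ℝ} (hq : |q| < 1) (m : ℕ) : qShift q q m ≠ 0 := by
  unfold qShift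
  exact Finset.prod_ne_zero_iff.mpr fun j _ => qfac_ne hq j

lemma qShift_succ (q : ℝ) (m : ℕ) : qShift q q (m+1) = qShift q q m * (1 - q^m * q) := by
  unfold qShift; exact Finset.prod_range_succ _ _

lemma qShift_zero (q : ℝ) : qShift q q 0 = 1 := by simp [qShift]

lemma qBinom_zero {q : ℝ} (hq : |q| < 1) (n : ℕ) : qBinom q n 0 = 1 := by
  unfold qBinom
  rw [Nat.sub_zero, qShift_zero, mul_one, div_self (qShift_ne hq n)]

lemma qBinom_self {q : ℝ} (hq : |q| < 1) (n : ℕ) : qBinom q n n = 1 := by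
  unfold qBinom
  rw [Nat.sub_self, qShift_zero, one_mul, div_self (qShift_ne hq n)]

lemma qBinom_pascal {q : ℝ} (hq : |q| < 1) {n k : ℕ} (hk : k < n) :
    qBinom q (n+1) (k+1) = qBinom q n (k+1) + q^(n-k) * qBinom q n k := by
  obtain ⟨m, rfl⟩ : ∃ m, n = k + 1 + m := ⟨n - (k+1), by omega⟩
  unfold qBinom
  have e1 : k + 1 + m + 1 - (k + 1) = m + 1 := by omega
  have e2 : k + 1 + m - (k + 1) = m := by omega
  have e3 : k + 1 + m - k = m + 1 := by omega
  rw [e1, e2, e3, qShift_succ q (k+1+m), qShift_succ q m, qShift_succ q k]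
  have h1 := qShift_ne hq (k+1+m)
  have h2 := qShift_ne hq m
  have h3 := qShift_ne hq k
  have h4 := qfac_ne hq (k+1+m)
  have h5 := qfac_ne hq m
  have h6 := qfac_ne hq k
  have h5' : 1 - q * q ^ m ≠ 0 := by rwa [mul_comm]
  have h6' : 1 - q * q ^ k ≠ 0 := by rwa [mul_comm]
  field_simp
  ring

lemma tri (k : ℕ) : (k+1) * (k+1-1) / 2 = k * (k-1) / 2 + k := by
  have h1 : (k+1) * (k+1-1) = k * (k-1) + 2 * k := by
    cases k with
    | zero => rfl
    | succ j => show (j+1+1) * (j+1) = (j+1) * j + 2 * (j+1); ring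
  have h2 : 2 ∣ k * (k-1) := by
    cases k with
    | zero => simp
    | succ j =>
      show 2 ∣ (j+1) * j
      rw [mul_comm]
      exact (Nat.even_mul_succ_self j).two_dvd
  omega

noncomputable def qc (q : ℝ) (n k : ℕ) : ℝ :=
  if k ≤ n then qBinom q n k * q ^ (k * (k - 1) / 2) else 0

lemma qc_zero {q : ℝ} (hq : |q| < 1) (n : ℕ) : qc q n 0 = 1 := by
  simp [qc, qBinom_zero hq]

lemma qc_rec {q : ℝ} (hq : |q| < 1) (n k : ℕ) :
    qc q (n+1) (k+1) = qc q n (k+1) + q^n * qc q n k := by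
  unfold qc
  rcases lt_trichotomy k n with h | rfl | h
  · rw [if_pos (by omega), if_pos (by omega), if_pos (by omega), qBinom_pascal hq h, add_mul]
    have hE : n - k + (k+1)*(k+1-1)/2 = n + (k*(k-1)/2) := by have := tri k; omega
    have : q^(n-k) * qBinom q n k * q^((k+1)*(k+1-1)/2)
        = q^n * (qBinom q n k * q^(k*(k-1)/2)) := by
      rw [mul_right_comm, ← pow_add, hE, pow_add]; ring
    rw [this]
  · rw [if_pos (by omega), if_neg (by omega), if_pos (by omega), qBinom_self hq,
      qBinom_self hq, tri k, pow_add]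
    ring
  · rw [if_neg (by omega), if_neg (by omega), if_neg (by omega)]
    ring

lemma qc_cauchy {q : ℝ} (hq : |q| < 1) (n : ℕ) (t : ℝ) :
    ∑ k ∈ Finset.range (n+1), qc q n k * t ^ k = ∏ j ∈ Finset.range n, (1 + q ^ j * t) := by
  induction n with
  | zero => simp [qc_zero hq]
  | succ n ih =>
    rw [Finset.sum_range_succ' (fun k => qc q (n+1) k * t ^ k) (n+1)]
    have hsplit : ∀ k ∈ Finset.range (n+1), qc q (n+1) (k+1) * t^(k+1)
        = qc q n (k+1) * t^(k+1) + (q^n * t) * (qc q n k * t^k) := by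
      intro k _
      rw [qc_rec hq]
      ring
    rw [Finset.sum_congr rfl hsplit, Finset.sum_add_distrib, ← Finset.mul_sum, ih]
    have h1 : ∑ k ∈ Finset.range (n+1), qc q n (k+1) * t^(k+1)
        = ∑ k ∈ Finset.range (n+1), qc q n k * t^k - qc q n 0 * t^0 := by
      have h2 := Finset.sum_range_succ' (fun k => qc q n k * t ^ k) n
      have h3 := Finset.sum_range_succ (fun k => qc q n (k+1) * t ^ (k+1)) n
      have htop : qc q n (n+1) * t^(n+1) = 0 := by simp [qc]
      rw [h3, htop, add_zero, h2]
      ring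
    rw [h1, ih, Finset.prod_range_succ]
    simp only [qc_zero hq]
    ring

lemma Hprod {q : ℝ} (hq : |q| < 1) {x : ℝ} (hx0 : 0 ≤ x) (n : ℕ) :
    ∑ k ∈ Finset.range (n+1),
        qBinom q n k * q ^ (k * (k - 1) / 2) * (1 + x) ^ (n - k) * (-x) ^ k
      = ∏ j ∈ Finset.range n, (1 + (1 - q ^ j) * x) := by
  have hx1 : (0:ℝ) < 1 + x := by linarith
  have hne : (1 + x) ≠ 0 := ne_of_gt hx1
  set t : ℝ := -x / (1 + x) with ht
  have step : ∑ k ∈ Finset.range (n+1),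
      qBinom q n k * q ^ (k * (k - 1) / 2) * (1 + x) ^ (n - k) * (-x) ^ k
      = (1+x)^n * ∑ k ∈ Finset.range (n+1), qc q n k * t ^ k := by
    rw [Finset.mul_sum]
    apply Finset.sum_congr rfl
    intro k hk
    have hk' : k ≤ n := by have := Finset.mem_range.mp hk; omega
    have hpow : (1+x)^(n-k) * (1+x)^k = (1+x)^n := by
      rw [← pow_add]; congr 1; omega
    rw [qc, if_pos hk', ht, div_pow]
    rw [div_eq_mul_inv, mul_comm ((-x)^k)]
    field_simp
    rw [mul_comm ((1+x)^(n-k)) ((1+x)^k)] at hpow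
    rw [← hpow]
    ring
  rw [step, qc_cauchy hq]
  have : (1+x)^n = ∏ _j ∈ Finset.range n, (1+x) := by
    rw [Finset.prod_const, Finset.card_range]
  rw [this, ← Finset.prod_mul_distrib]
  apply Finset.prod_congr rfl
  intro j _
  rw [ht]
  field_simp
  ring

lemma qpow_le_one {q : ℝ} (hq : |q| < 1) (j : ℕ) : q ^ j ≤ 1 := by
  calc q ^ j ≤ |q ^ j| := le_abs_self _
    _ = |q| ^ j := abs_pow q j
    _ ≤ 1 := pow_le_one₀ (abs_nonneg q) hq.le

lemma qpow_ge {q : ℝ} (hq : |q| < 1) (j : ℕ) : -1 ≤ q ^ j := by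
  have : |q ^ j| ≤ 1 := by
    rw [abs_pow]; exact pow_le_one₀ (abs_nonneg q) hq.le
  linarith [(abs_le.mp this).1]

lemma g_nonneg {q x : ℝ} (hq : |q| < 1) (hx0 : 0 ≤ x) (j : ℕ) :
    0 ≤ 1 + (1 - q ^ j) * x := by
  have := qpow_le_one hq j
  nlinarith

lemma g_even_le {q x : ℝ} (hq : |q| < 1) (hx0 : 0 ≤ x) (hx1 : x ≤ 1) (m : ℕ) :
    1 + (1 - q ^ (2*m)) * x ≤ 2 := by
  have hs0 : 0 ≤ q ^ (2*m) := by rw [pow_mul]; positivity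
  nlinarith

lemma pair_le {q x : ℝ} (hq : |q| < 1) (hx0 : 0 ≤ x) (hx1 : x ≤ 1) (m : ℕ) :
    (1 + (1 - q ^ (2*m)) * x) * (1 + (1 - q ^ (2*m+1)) * x) ≤ 4 := by
  have hs0 : 0 ≤ q ^ (2*m) := by rw [pow_mul]; positivity
  have hs1 : q ^ (2*m) ≤ 1 := qpow_le_one hq (2*m)
  have hsq : q ^ (2*m+1) = q ^ (2*m) * q := pow_succ q (2*m)
  have hq1 : q ≤ 1 := by linarith [(abs_lt.mp hq).2]
  have hq2 : -1 ≤ q := by linarith [(abs_lt.mp hq).1]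
  rw [hsq]
  set s := q ^ (2*m) with hs
  have hsq1 : s * q ≤ s := by nlinarith
  have hsq2 : -s ≤ s * q := by nlinarith
  have h1 : 0 ≤ (1 - s) * (1 - s * q) := mul_nonneg (by linarith) (by linarith)
  have h2 : 0 ≤ 2 - s - s * q := by linarith
  have h3 : 0 ≤ (2 - s) * s * (q + 1) := by
    apply mul_nonneg (mul_nonneg (by linarith) hs0) (by linarith)
  have h4 : 0 ≤ (2 - s - s * q) * (1 - x) := mul_nonneg h2 (by linarith)
  have h5 : 0 ≤ (1 - s) * (1 - s * q) * ((1 - x) * (1 + x)) :=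
    mul_nonneg h1 (mul_nonneg (by linarith) (by linarith))
  nlinarith [sq_nonneg s, h3, h4, h5]

lemma prod_even_le {q x : ℝ} (hq : |q| < 1) (hx0 : 0 ≤ x) (hx1 : x ≤ 1) (m : ℕ) :
    ∏ j ∈ Finset.range (2*m), (1 + (1 - q ^ j) * x) ≤ 4 ^ m := by
  induction m with
  | zero => simp
  | succ m ih =>
    have h2 : 2*(m+1) = (2*m + 1) + 1 := by omega
    rw [h2, Finset.prod_range_succ, Finset.prod_range_succ]
    have hp : 0 ≤ ∏ j ∈ Finset.range (2*m), (1 + (1 - q ^ j) * x) :=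
      Finset.prod_nonneg fun j _ => g_nonneg hq hx0 j
    have hpair := pair_le hq hx0 hx1 m
    have h1 := g_nonneg hq hx0 (2*m)
    have h2' := g_nonneg hq hx0 (2*m+1)
    calc (∏ j ∈ Finset.range (2*m), (1 + (1 - q ^ j) * x)) * (1 + (1 - q ^ (2*m)) * x)
          * (1 + (1 - q ^ (2*m+1)) * x)
        = (∏ j ∈ Finset.range (2*m), (1 + (1 - q ^ j) * x))
          * ((1 + (1 - q ^ (2*m)) * x) * (1 + (1 - q ^ (2*m+1)) * x)) := by ring
      _ ≤ 4 ^ m * 4 := by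
          apply mul_le_mul ih hpair (mul_nonneg h1 h2') (by positivity)
      _ = 4 ^ (m+1) := by rw [pow_succ]

theorem Hq_bounded' (q : ℝ) (hq1 : |q| < 1) (n : ℕ)
    (x : ℝ) (hx : x ∈ Set.Icc (0 : ℝ) 1) :
    |∑ k ∈ Finset.range (n + 1),
        qBinom q n k * q ^ (k * (k - 1) / 2) * (1 + x) ^ (n - k) * (-x) ^ k| ≤ 2 ^ n := by
  obtain ⟨hx0, hx1⟩ := hx
  rw [Hprod hq1 hx0 n, abs_of_nonneg (Finset.prod_nonneg fun j _ => g_nonneg hq1 hx0 j)]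
  rcases Nat.even_or_odd n with ⟨m, hm⟩ | ⟨m, hm⟩
  · have hn : n = 2*m := by omega
    subst hn
    calc ∏ j ∈ Finset.range (2*m), (1 + (1 - q ^ j) * x) ≤ 4^m :=
          prod_even_le hq1 hx0 hx1 m
      _ = 2^(2*m) := by rw [pow_mul]; norm_num
  · have hn : n = 2*m + 1 := by omega
    subst hn
    rw [Finset.prod_range_succ]
    have hp : 0 ≤ ∏ j ∈ Finset.range (2*m), (1 + (1 - q ^ j) * x) :=
      Finset.prod_nonneg fun j _ => g_nonneg hq1 hx0 j
    calc (∏ j ∈ Finset.range (2*m), (1 + (1 - q ^ j) * x)) * (1 + (1 - q ^ (2*m)) * x)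
        ≤ 4^m * 2 := mul_le_mul (prod_even_le hq1 hx0 hx1 m) (g_even_le hq1 hx0 hx1 m)
            (g_nonneg hq1 hx0 (2*m)) (by positivity)
      _ = 2^(2*m+1) := by rw [pow_succ, pow_mul]; norm_num

/-- For `h = 1` and `0 < |q| < 1`, `|H_q^n(x)| ≤ 2ⁿ` for `x ∈ [0,1]`. -/
theorem Hq_bounded (q : ℝ) (hq0 : 0 < |q|) (hq1 : |q| < 1) (n : ℕ)
    (x : ℝ) (hx : x ∈ Set.Icc (0 : ℝ) 1) :
    |∑ k ∈ Finset.range (n + 1),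
        qBinom q n k * q ^ (k * (k - 1) / 2) * (1 + x) ^ (n - k) * (-x) ^ k| ≤ 2 ^ n := by
  exact Hq_bounded' q hq1 n x hx
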